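/- arXiv:1211.3919 — 4 statements merged into one kernel-verified Lean document; each statement's English description precedes it below -/
import Mathlib

section
/- Let f_1,...,f_n ∈ ℤ[x_1,...,x_N] with n ≤ N, and suppose a ∈ ℤ^N satisfies f_i(a) ≡ 0 (mod p^{2σ-1+ν}) for all i, and the Jacobian of f at a has an n×n minor with determinant of p-adic absolute value p^{1-σ}. Then the number M(σ,ν) of solutions modulo p^{2σ-1+ν} to this system (counted with the distinctness convention of the paper) satisfies M(σ, ν+1) ≥ p^{N-n} M(σ, ν). -/
open MvPolynomial Matrix

namespace Stmt5Aux

lemma eval_sub_dvd {N : ℕ} (M : ℤ) (x y : Fin N → ℤ) (h : ∀ j, M ∣ x j - y j)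
    (g : MvPolynomial (Fin N) ℤ) : M ∣ eval x g - eval y g := by
  induction g using MvPolynomial.induction_on with
  | C a => simp
  | add g₁ g₂ h1 h2 =>
      have e : eval x (g₁ + g₂) - eval y (g₁ + g₂)
          = (eval x g₁ - eval y g₁) + (eval x g₂ - eval y g₂) := by simp; ring
      rw [e]; exact dvd_add h1 h2
  | mul_X g j hg =>
      have e : eval x (g * X j) - eval y (g * X j)
          = (eval x g - eval y g) * x j + eval y g * (x j - y j) := by simp; ring
      rw [e]
      exact dvd_add (Dvd.dvd.mul_right hg _) (Dvd.dvd.mul_left (h j) _)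

lemma taylor_dvd {N : ℕ} (M : ℤ) (x t : Fin N → ℤ) (g : MvPolynomial (Fin N) ℤ) :
    M ^ 2 ∣ eval (fun j => x j + M * t j) g - eval x g
      - M * ∑ j, t j * eval x (pderiv j g) := by
  induction g using MvPolynomial.induction_on with
  | C a => simp
  | add g₁ g₂ h1 h2 =>
      have e : eval (fun j => x j + M * t j) (g₁ + g₂) - eval x (g₁ + g₂)
          - M * ∑ j, t j * eval x (pderiv j (g₁ + g₂))
          = (eval (fun j => x j + M * t j) g₁ - eval x g₁
              - M * ∑ j, t j * eval x (pderiv j g₁))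
            + (eval (fun j => x j + M * t j) g₂ - eval x g₂
              - M * ∑ j, t j * eval x (pderiv j g₂)) := by
        simp [map_add, Finset.mul_sum, mul_add, Finset.sum_add_distrib]; ring
      rw [e]; exact dvd_add h1 h2
  | mul_X g k hg =>
      have hM : M ∣ eval (fun j => x j + M * t j) g - eval x g := by
        refine eval_sub_dvd M _ _ (fun j => ?_) g
        simp
      have hsum : ∑ j, t j * eval x (pderiv j (g * X k))
          = (∑ j, t j * eval x (pderiv j g)) * x k + t k * eval x g := by
        have hp : ∀ j : Fin N, eval x (pderiv j (g * X k))
            = eval x (pderiv j g) * x k + (if j = k then eval x g else 0) := by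
          intro j
          rw [pderiv_mul, pderiv_X]
          by_cases h : j = k <;> simp [h, Pi.single_apply]
        simp only [hp, mul_add]
        rw [Finset.sum_add_distrib, Finset.sum_mul]
        congr 1
        · exact Finset.sum_congr rfl (fun j _ => by ring)
        · simp [Finset.sum_ite_eq']
      have e : eval (fun j => x j + M * t j) (g * X k) - eval x (g * X k)
          - M * ∑ j, t j * eval x (pderiv j (g * X k))
          = (eval (fun j => x j + M * t j) g - eval x g
              - M * ∑ j, t j * eval x (pderiv j g)) * x k
            + (M * t k) * (eval (fun j => x j + M * t j) g - eval x g) := by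
        rw [hsum]; simp; ring
      rw [e]
      refine dvd_add (Dvd.dvd.mul_right hg _) ?_
      have h2 : M ^ 2 = M * M := sq M
      rw [h2]
      exact mul_dvd_mul (Dvd.dvd.mul_right (dvd_refl M) _) hM

lemma valInt_dvd (M : ℕ) [NeZero M] (x : ℤ) :
    (M:ℤ) ∣ (((x : ZMod M)).val : ℤ) - x := by
  have h : ((((x : ZMod M)).val : ℤ) : ZMod M) = ((x : ℤ) : ZMod M) := by
    push_cast [ZMod.natCast_val, ZMod.cast_id]
    rfl
  rw [ZMod.intCast_eq_intCast_iff] at h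
  exact h.symm.dvd

lemma intCast_eq_of_dvd (M : ℕ) (x y : ℤ) (h : (M:ℤ) ∣ x - y) :
    ((x : ℤ) : ZMod M) = ((y : ℤ) : ZMod M) := by
  rw [ZMod.intCast_eq_intCast_iff]
  exact (Int.ModEq.symm (Int.modEq_iff_dvd.mpr h))

lemma det_congr {n : ℕ} (M : ℕ) (B C : Matrix (Fin n) (Fin n) ℤ)
    (h : ∀ i k, (M:ℤ) ∣ B i k - C i k) : (M:ℤ) ∣ B.det - C.det := by
  have hBC : (Int.castRingHom (ZMod M)).mapMatrix B
      = (Int.castRingHom (ZMod M)).mapMatrix C := by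
    ext i k
    simp only [RingHom.mapMatrix_apply, Matrix.map_apply, Int.coe_castRingHom]
    exact intCast_eq_of_dvd M _ _ (h i k)
  have h2 : ((B.det : ℤ) : ZMod M) = ((C.det : ℤ) : ZMod M) := by
    show (Int.castRingHom (ZMod M)) B.det = (Int.castRingHom (ZMod M)) C.det
    rw [RingHom.map_det, RingHom.map_det, hBC]
  rw [ZMod.intCast_eq_intCast_iff] at h2
  exact h2.symm.dvd

variable {n N : ℕ}

noncomputable def Jmat (hnN : n ≤ N) (f : Fin n → MvPolynomial (Fin N) ℤ)
    (x : Fin N → ℤ) : Matrix (Fin n) (Fin n) ℤ :=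
  Matrix.of fun i k : Fin n => eval x (pderiv (Fin.castLE hnN k) (f i))

def phiMap (n : ℕ) {N : ℕ} (p σ : ℕ) (μ : ℕ) :
    (Fin N → ZMod (p^μ)) → (Fin N → ZMod (p^μ)) :=
  fun a j => if (j:ℕ) < n then (p : ZMod (p^μ))^(σ-1) * a j else a j

def solSet (p σ : ℕ) (hnN : n ≤ N) (f : Fin n → MvPolynomial (Fin N) ℤ) (μ : ℕ) :
    Set (Fin N → ZMod (p^μ)) :=
  {a | (∀ i, ((p : ℤ) ^ μ) ∣ eval (fun j => ((a j).val : ℤ)) (f i)) ∧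
    ((p:ℤ)^(σ-1) ∣ (Jmat hnN f (fun j => ((a j).val : ℤ))).det) ∧
    ¬ ((p:ℤ)^σ ∣ (Jmat hnN f (fun j => ((a j).val : ℤ))).det)}

lemma lift_exists (hnN : n ≤ N) (f : Fin n → MvPolynomial (Fin N) ℤ)
    (p : ℕ) (hp : p.Prime) (σ ν : ℕ) (hσ : 1 ≤ σ)
    (x : Fin N → ℤ) (e : Fin N → ℤ)
    (hx : ∀ i, (p:ℤ) ^ (2*σ-1+ν) ∣ eval x (f i))
    (h1 : (p:ℤ) ^ (σ-1) ∣ (Jmat hnN f x).det)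
    (h2 : ¬ (p:ℤ) ^ σ ∣ (Jmat hnN f x).det) :
    ∃ t : Fin N → ℤ, (∀ j : Fin N, n ≤ (j:ℕ) → t j = (p:ℤ)^(σ-1) * e j) ∧
      ∀ i, (p:ℤ) ^ (2*σ-1+(ν+1)) ∣ eval (fun j => x j + (p:ℤ)^(σ+ν) * t j) (f i) := by
  classical
  set m := 2*σ-1+ν with hm
  set K := σ+ν with hK
  have hmK : m = (σ-1) + K := by omega
  have hm1 : 2*σ-1+(ν+1) = m + 1 := by omega
  obtain ⟨u, hu⟩ := h1
  have hpu : ¬ (p:ℤ) ∣ u := by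
    intro ⟨z, hz⟩
    refine h2 ⟨z, ?_⟩
    have e : (p:ℤ)^σ = (p:ℤ)^(σ-1)*p := by
      rw [← pow_succ]; congr 1; omega
    rw [hu, hz, e]; ring
  obtain ⟨v, hv⟩ : ∃ v : ℤ, (p:ℤ) ∣ u*v - 1 := by
    have hc : IsCoprime (p:ℤ) u :=
      ((Nat.prime_iff_prime_int.mp hp).coprime_iff_not_dvd).mpr hpu
    obtain ⟨a, b, hab⟩ := hc
    exact ⟨b, ⟨-a, by linarith⟩⟩
  obtain ⟨q, hq⟩ : (p:ℤ) ∣ 1 - u*v := by rw [← neg_sub]; exact dvd_neg.mpr hv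
  choose c hc using hx
  set D : Fin n → Fin N → ℤ := fun i j => eval x (pderiv j (f i)) with hD
  set s : Fin n → ℤ := fun i => ∑ j : Fin N, (if (j:ℕ) < n then 0 else e j) * D i j with hs
  set cs : Fin n → ℤ := fun i => c i + s i with hcs
  set w : Fin n → ℤ := (-v) • ((Jmat hnN f x).adjugate *ᵥ cs) with hw
  set t : Fin N → ℤ := fun j => if h : (j:ℕ) < n then w ⟨j, h⟩ else (p:ℤ)^(σ-1) * e j with ht
  refine ⟨t, fun j hj => by simp [ht, Nat.not_lt.mpr hj], ?_⟩
  intro i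
  have hJw : ∀ i', ∑ k, Jmat hnN f x i' k * w k = -(v * (u * (p:ℤ)^(σ-1) * cs i')) := by
    intro i'
    have h3 : Jmat hnN f x *ᵥ w = (-v) • (((p:ℤ)^(σ-1) * u) • cs) := by
      rw [hw, Matrix.mulVec_smul, Matrix.mulVec_mulVec, Matrix.mul_adjugate, hu,
        Matrix.smul_mulVec, Matrix.one_mulVec]
    have h4 := congrFun h3 i'
    simpa [Matrix.mulVec, dotProduct, mul_comm] using h4
  have hsplit : ∑ j, t j * D i j = (∑ k, Jmat hnN f x i k * w k) + (p:ℤ)^(σ-1) * s i := by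
    have e1 : ∀ j : Fin N, t j * D i j
        = (if h : (j:ℕ) < n then w ⟨(j:ℕ), h⟩ else 0) * D i j
          + ((p:ℤ)^(σ-1) * (if (j:ℕ) < n then 0 else e j)) * D i j := by
      intro j
      by_cases h : (j:ℕ) < n <;> simp [ht, h]
    rw [Finset.sum_congr rfl (fun j _ => e1 j), Finset.sum_add_distrib]
    congr 1
    · rw [← Finset.sum_subset (Finset.subset_univ ((Finset.univ : Finset (Fin n)).map
          (Fin.castLEEmb hnN)))]
      · rw [Finset.sum_map]
        refine Finset.sum_congr rfl (fun k _ => ?_)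
        have hk : ((Fin.castLEEmb hnN k : Fin N) : ℕ) < n := by
          simpa [Fin.castLEEmb] using k.isLt
        rw [dif_pos hk]
        simp [Jmat, Fin.castLEEmb, mul_comm, hD]
      · intro j _ hj
        have hn : ¬ ((j:ℕ) < n) := by
          intro hlt
          exact hj (by
            simp only [Finset.mem_map, Finset.mem_univ, true_and]
            exact ⟨⟨(j:ℕ), hlt⟩, by ext; simp [Fin.castLEEmb]⟩)
        rw [dif_neg hn, zero_mul]
    · rw [hs, Finset.mul_sum]
      exact Finset.sum_congr rfl (fun j _ => by ring)
  have htay := taylor_dvd ((p:ℤ)^K) x t (f i)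
  have hdvd2K : (p:ℤ)^(m+1) ∣ ((p:ℤ)^K)^2 := by
    rw [← pow_mul]
    exact pow_dvd_pow _ (by omega)
  have hT : (p:ℤ)^(m+1) ∣ eval (fun j => x j + (p:ℤ)^K * t j) (f i) - eval x (f i)
      - (p:ℤ)^K * ∑ j, t j * eval x (pderiv j (f i)) := dvd_trans hdvd2K htay
  have hR : eval x (f i) + (p:ℤ)^K * ∑ j, t j * eval x (pderiv j (f i))
      = (p:ℤ)^(m+1) * (q * cs i) := by
    have hsum : ∑ j, t j * eval x (pderiv j (f i)) = ∑ j, t j * D i j := rfl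
    rw [hsum, hsplit, hJw i, hc i]
    have e1 : (p:ℤ)^m = (p:ℤ)^(σ-1) * (p:ℤ)^K := by rw [hmK, pow_add]
    have e2 : (p:ℤ)^(m+1) = (p:ℤ)^(σ-1) * (p:ℤ)^K * (p:ℤ) := by rw [pow_succ, e1]
    rw [e1, e2, hcs]
    linear_combination ((p:ℤ)^(σ-1)*(p:ℤ)^K*(c i + s i)) * hq
  rw [hm1]
  have hdec : eval (fun j => x j + (p:ℤ)^(σ+ν) * t j) (f i)
      = (eval (fun j => x j + (p:ℤ)^K * t j) (f i) - eval x (f i)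
          - (p:ℤ)^K * ∑ j, t j * eval x (pderiv j (f i)))
        + (eval x (f i) + (p:ℤ)^K * ∑ j, t j * eval x (pderiv j (f i))) := by
    rw [hK]; ring
  rw [hdec, hR]
  exact dvd_add hT (Dvd.intro _ rfl)

def ebar (n : ℕ) {N : ℕ} (p : ℕ) (e : Fin (N-n) → ZMod p) : Fin N → ℤ :=
  fun j => if h : n ≤ (j:ℕ) then
    ((e ⟨(j:ℕ) - n, by have := j.isLt; omega⟩).val : ℤ) else 0

lemma key (p : ℕ) (hp : p.Prime) (σ ν : ℕ) (hσ : 1 ≤ σ) (hnN : n ≤ N)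
    (f : Fin n → MvPolynomial (Fin N) ℤ) :
    p^(N-n) * Nat.card ↑(phiMap n p σ (2*σ-1+ν) '' solSet p σ hnN f (2*σ-1+ν))
      ≤ Nat.card ↑(phiMap n p σ (2*σ-1+ν+1) '' solSet p σ hnN f (2*σ-1+ν+1)) := by
  classical
  haveI : NeZero p := ⟨hp.pos.ne'⟩
  set m := 2*σ-1+ν with hm
  haveI : NeZero (p^m) := ⟨pow_ne_zero _ hp.pos.ne'⟩
  haveI : NeZero (p^(m+1)) := ⟨pow_ne_zero _ hp.pos.ne'⟩
  set Img1 := phiMap n p σ m '' solSet p σ hnN f m with hImg1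
  set Img2 := phiMap n p σ (m+1) '' solSet p σ hnN f (m+1) with hImg2
  -- choose preimages
  have hpre : ∀ b : ↥Img1, ∃ a, a ∈ solSet p σ hnN f m
      ∧ phiMap n p σ m a = (b : Fin N → ZMod (p^m)) := fun b => b.2
  choose A hA1 hA2 using hpre
  -- integer representatives
  set X : ↥Img1 → Fin N → ℤ := fun b j => ((A b j).val : ℤ) with hX
  -- lifts
  have hlift : ∀ be : (↥Img1 × (Fin (N-n) → ZMod p)), ∃ t : Fin N → ℤ,
      (∀ j : Fin N, n ≤ (j:ℕ) → t j = (p:ℤ)^(σ-1) * ebar n p be.2 j) ∧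
      ∀ i, (p:ℤ)^(2*σ-1+(ν+1)) ∣
        eval (fun j => X be.1 j + (p:ℤ)^(σ+ν) * t j) (f i) := by
    intro be
    exact lift_exists hnN f p hp σ ν hσ (X be.1) (ebar n p be.2)
      (hA1 be.1).1 (hA1 be.1).2.1 (hA1 be.1).2.2
  choose T hT1 hT2 using hlift
  set X' : (↥Img1 × (Fin (N-n) → ZMod p)) → Fin N → ℤ :=
    fun be j => X be.1 j + (p:ℤ)^(σ+ν) * T be j with hX'
  -- basic congruences
  have hσν : σ ≤ σ + ν := by omega
  have hσm1 : σ ≤ m + 1 := by omega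
  have hcongXX' : ∀ be j, (p:ℤ)^(σ+ν) ∣ X' be j - X be.1 j := by
    intro be j
    simp [hX']
  have hcongVal : ∀ be (j : Fin N),
      (p:ℤ)^(m+1) ∣ (((X' be j : ZMod (p^(m+1))).val : ℤ)) - X' be j := by
    intro be j
    have := valInt_dvd (p^(m+1)) (X' be j)
    rwa [Nat.cast_pow] at this
  -- membership of lifted point
  have hmem : ∀ be : (↥Img1 × (Fin (N-n) → ZMod p)),
      (fun j => ((X' be j : ℤ) : ZMod (p^(m+1)))) ∈ solSet p σ hnN f (m+1) := by
    intro be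
    set y : Fin N → ℤ := fun j => (((X' be j : ZMod (p^(m+1))).val : ℤ)) with hy
    have hyX' : ∀ j, (p:ℤ)^(m+1) ∣ y j - X' be j := fun j => hcongVal be j
    have hyXσ : ∀ j, (p:ℤ)^σ ∣ y j - X be.1 j := by
      intro j
      have e1 : y j - X be.1 j = (y j - X' be j) + (X' be j - X be.1 j) := by ring
      rw [e1]
      exact dvd_add (dvd_trans (pow_dvd_pow _ hσm1) (hyX' j))
        (dvd_trans (pow_dvd_pow _ hσν) (hcongXX' be j))
    refine ⟨?_, ?_, ?_⟩
    · intro i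
      have e1 : eval y (f i) = (eval y (f i) - eval (X' be) (f i))
          + eval (X' be) (f i) := by ring
      rw [e1]
      exact dvd_add (eval_sub_dvd _ _ _ hyX' (f i)) (hT2 be i)
    · -- p^(σ-1) ∣ det at y
      have hd := det_congr (p^σ) (Jmat hnN f y) (Jmat hnN f (X be.1)) (fun i k => by
        rw [Nat.cast_pow]
        exact eval_sub_dvd _ _ _ hyXσ _)
      rw [Nat.cast_pow] at hd
      have e1 : (Jmat hnN f y).det = ((Jmat hnN f y).det - (Jmat hnN f (X be.1)).det)
          + (Jmat hnN f (X be.1)).det := by ring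
      rw [e1]
      exact dvd_add (dvd_trans (pow_dvd_pow _ (by omega)) hd) (hA1 be.1).2.1
    · -- ¬ p^σ ∣ det at y
      intro hcon
      have hd := det_congr (p^σ) (Jmat hnN f y) (Jmat hnN f (X be.1)) (fun i k => by
        rw [Nat.cast_pow]
        exact eval_sub_dvd _ _ _ hyXσ _)
      rw [Nat.cast_pow] at hd
      refine (hA1 be.1).2.2 ?_
      have e1 : (Jmat hnN f (X be.1)).det = (Jmat hnN f y).det
          - ((Jmat hnN f y).det - (Jmat hnN f (X be.1)).det) := by ring
      rw [e1]
      exact dvd_sub hcon hd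
  -- the lifting map
  set G : (↥Img1 × (Fin (N-n) → ZMod p)) → (Fin N → ZMod (p^(m+1))) :=
    fun be => phiMap n p σ (m+1) (fun j => ((X' be j : ℤ) : ZMod (p^(m+1)))) with hG
  have hGmem : ∀ be, G be ∈ Img2 := fun be => ⟨_, hmem be, rfl⟩
  set F : (↥Img1 × (Fin (N-n) → ZMod p)) → ↥Img2 := fun be => ⟨G be, hGmem be⟩ with hF
  -- downward compatibility
  have hmdvd : p^m ∣ p^(m+1) := pow_dvd_pow _ (by omega)
  set ψ : ZMod (p^(m+1)) →+* ZMod (p^m) := ZMod.castHom hmdvd (ZMod (p^m)) with hψ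
  have hXA : ∀ (b : ↥Img1) (j : Fin N), ((X b j : ℤ) : ZMod (p^m)) = A b j := by
    intro b j
    simp [hX, ZMod.natCast_val, ZMod.cast_id]
  have hdown : ∀ be, (fun j => ψ (G be j)) = phiMap n p σ m (A be.1) := by
    intro be
    funext j
    have hmm : (p:ℤ)^m ∣ (p:ℤ)^(σ+ν) * (p:ℤ)^(σ-1) := by
      rw [← pow_add]
      exact pow_dvd_pow _ (by omega)
    by_cases hj : (j:ℕ) < n
    · have e0 : G be j = (p : ZMod (p^(m+1)))^(σ-1) * ((X' be j : ℤ) : ZMod (p^(m+1))) := by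
        simp [hG, phiMap, hj]
      have e1 : ψ (G be j) = ((((p:ℤ)^(σ-1) * X' be j) : ℤ) : ZMod (p^m)) := by
        rw [e0, _root_.map_mul, map_pow, map_natCast, map_intCast]
        push_cast
        ring
      rw [e1]
      have e2 : ((((p:ℤ)^(σ-1) * X' be j) : ℤ) : ZMod (p^m))
          = ((((p:ℤ)^(σ-1) * X be.1 j) : ℤ) : ZMod (p^m)) := by
        refine intCast_eq_of_dvd _ _ _ ?_
        rw [Nat.cast_pow]
        have e3 : (p:ℤ)^(σ-1) * X' be j - (p:ℤ)^(σ-1) * X be.1 j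
            = ((p:ℤ)^(σ+ν) * (p:ℤ)^(σ-1)) * T be j := by
          simp [hX']; ring
        rw [e3]
        exact Dvd.dvd.mul_right hmm _
      rw [e2]
      have e4 : phiMap n p σ m (A be.1) j
          = (p : ZMod (p^m))^(σ-1) * ((X be.1 j : ℤ) : ZMod (p^m)) := by
        simp [phiMap, hj, hXA be.1 j]
      rw [e4]
      push_cast
      ring
    · have e1 : ψ (G be j) = ((X' be j : ℤ) : ZMod (p^m)) := by
        simp [hG, phiMap, hj, map_intCast]
      rw [e1]
      have e2 : ((X' be j : ℤ) : ZMod (p^m)) = ((X be.1 j : ℤ) : ZMod (p^m)) := by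
        refine intCast_eq_of_dvd _ _ _ ?_
        rw [Nat.cast_pow]
        have e3 : X' be j - X be.1 j = ((p:ℤ)^(σ+ν) * (p:ℤ)^(σ-1)) * ebar n p be.2 j := by
          simp [hX', hT1 be j (Nat.not_lt.mp hj)]; ring
        rw [e3]
        exact Dvd.dvd.mul_right hmm _
      rw [e2]
      simp [phiMap, hj, hXA be.1 j]
  -- injectivity
  have hFinj : Function.Injective F := by
    rintro ⟨b1, e1⟩ ⟨b2, e2⟩ hEq
    have hGeq : G (b1, e1) = G (b2, e2) := congrArg Subtype.val hEq
    have hb : b1 = b2 := by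
      refine Subtype.ext ?_
      rw [← hA2 b1, ← hA2 b2, ← hdown (b1, e1), ← hdown (b2, e2), hGeq]
    subst hb
    have he : e1 = e2 := by
      funext k
      have hkN : n + (k:ℕ) < N := by have := k.isLt; omega
      set j : Fin N := ⟨n + (k:ℕ), hkN⟩ with hj
      have hjn : ¬ ((j:ℕ) < n) := by simp [hj]
      have hGj : G (b1, e1) j = G (b1, e2) j := congrFun hGeq j
      have hform : ∀ e : Fin (N-n) → ZMod p, G (b1, e) j
          = (((X b1 j + (p:ℤ)^(σ+ν) * ((p:ℤ)^(σ-1) * ((e k).val : ℤ))) : ℤ)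
              : ZMod (p^(m+1))) := by
        intro e
        have hTj : T (b1, e) j = (p:ℤ)^(σ-1) * ebar n p e j :=
          hT1 (b1, e) j (by simp [hj])
        have hebar : ebar n p e j = ((e k).val : ℤ) := by
          have hnj : n ≤ (j:ℕ) := by simp [hj]
          have hidx : (⟨(j:ℕ) - n, by have := j.isLt; omega⟩ : Fin (N-n)) = k := by
            ext
            simp [hj]
          simp only [ebar, dif_pos hnj, hidx]
        simp only [hG, phiMap, if_neg hjn, hX', hTj, hebar]
      rw [hform e1, hform e2] at hGj
      rw [ZMod.intCast_eq_intCast_iff] at hGj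
      have hdvd : ((p^(m+1) : ℕ) : ℤ) ∣
          (X b1 j + (p:ℤ)^(σ+ν) * ((p:ℤ)^(σ-1) * ((e2 k).val : ℤ)))
          - (X b1 j + (p:ℤ)^(σ+ν) * ((p:ℤ)^(σ-1) * ((e1 k).val : ℤ))) := hGj.dvd
      rw [Nat.cast_pow] at hdvd
      have hdvd2 : (p:ℤ)^m * (p:ℤ) ∣ (p:ℤ)^m * (((e2 k).val : ℤ) - ((e1 k).val : ℤ)) := by
        have e3 : (X b1 j + (p:ℤ)^(σ+ν) * ((p:ℤ)^(σ-1) * ((e2 k).val : ℤ)))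
            - (X b1 j + (p:ℤ)^(σ+ν) * ((p:ℤ)^(σ-1) * ((e1 k).val : ℤ)))
            = (p:ℤ)^m * (((e2 k).val : ℤ) - ((e1 k).val : ℤ)) := by
          rw [hm]
          rw [show (2*σ-1+ν) = (σ+ν) + (σ-1) by omega, pow_add]
          ring
        have e4 : (p:ℤ)^(m+1) = (p:ℤ)^m * (p:ℤ) := by rw [pow_succ]
        rw [← e3, ← e4]
        exact hdvd
      have hdvd3 : (p:ℤ) ∣ (((e2 k).val : ℤ) - ((e1 k).val : ℤ)) :=
        (mul_dvd_mul_iff_left (pow_ne_zero m (by exact_mod_cast hp.pos.ne'))).mp hdvd2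
      have hcast : (((e2 k).val : ℕ) : ZMod p) = (((e1 k).val : ℕ) : ZMod p) := by
        have := intCast_eq_of_dvd p _ _ hdvd3
        exact_mod_cast this
      rw [ZMod.natCast_val, ZMod.natCast_val, ZMod.cast_id, ZMod.cast_id] at hcast
      exact hcast.symm
    rw [he]
  -- counting
  have hcard : Nat.card (↥Img1 × (Fin (N-n) → ZMod p)) = p^(N-n) * Nat.card ↥Img1 := by
    rw [Nat.card_prod, Nat.card_fun, Nat.card_zmod]
    have : Nat.card (Fin (N-n)) = N - n := by
      simp [Nat.card_eq_fintype_card]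
    rw [this]
    ring
  calc p^(N-n) * Nat.card ↥Img1 = Nat.card (↥Img1 × (Fin (N-n) → ZMod p)) := hcard.symm
    _ ≤ Nat.card ↥Img2 := Nat.card_le_card_of_injective F hFinj

end Stmt5Aux

/-- `Mcount p n N σ ν hnN f` is the paper's `M(σ,ν)`: the number of residue classes
`ā` modulo `p^(2σ-1+ν)` with `fᵢ(ā) ≡ 0 (mod p^(2σ-1+ν))` for all `i` and such that
the fixed `n×n` minor `L₀` (the first `n` columns) of the Jacobian has determinant
of `p`-adic absolute value `p^(1-σ)`, where solutions are distinguished via the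
vectors `(p^(σ-1)ā₁, ā₂)` with `ā₁` the first `n` coordinates. -/
noncomputable def Mcount (p n N σ ν : ℕ) (hnN : n ≤ N)
    (f : Fin n → MvPolynomial (Fin N) ℤ) : ℕ :=
  Nat.card ((fun (a : Fin N → ZMod (p ^ (2 * σ - 1 + ν))) (j : Fin N) =>
      if (j : ℕ) < n then (p : ZMod (p ^ (2 * σ - 1 + ν))) ^ (σ - 1) * a j else a j) ''
    {a : Fin N → ZMod (p ^ (2 * σ - 1 + ν)) |
      (∀ i, ((p : ℤ) ^ (2 * σ - 1 + ν)) ∣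
          MvPolynomial.eval (fun j => ((a j).val : ℤ)) (f i)) ∧
      ((p : ℤ) ^ (σ - 1) ∣ Matrix.det (Matrix.of fun i k : Fin n =>
          MvPolynomial.eval (fun j => ((a j).val : ℤ))
            (MvPolynomial.pderiv (Fin.castLE hnN k) (f i)))) ∧
      ¬ ((p : ℤ) ^ σ ∣ Matrix.det (Matrix.of fun i k : Fin n =>
          MvPolynomial.eval (fun j => ((a j).val : ℤ))
            (MvPolynomial.pderiv (Fin.castLE hnN k) (f i))))})

/-- Lifting step: if the system has an approximate solution `a` modulo
`p^(2σ-1+ν)` whose Jacobian has an `n×n` minor of determinant with `p`-adic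
absolute value `p^(1-σ)`, then `M(σ, ν+1) ≥ p^(N-n) · M(σ, ν)`. -/
theorem stmt_5 (p : ℕ) (hp : p.Prime) (σ ν n N : ℕ) (hσ : 1 ≤ σ) (hnN : n ≤ N)
    (f : Fin n → MvPolynomial (Fin N) ℤ) (a : Fin N → ℤ)
    (ha : ∀ i, ((p : ℤ) ^ (2 * σ - 1 + ν)) ∣ MvPolynomial.eval a (f i))
    (hdet :
      ((p : ℤ) ^ (σ - 1) ∣ Matrix.det (Matrix.of fun i k : Fin n =>
          MvPolynomial.eval a (MvPolynomial.pderiv (Fin.castLE hnN k) (f i)))) ∧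
      ¬ ((p : ℤ) ^ σ ∣ Matrix.det (Matrix.of fun i k : Fin n =>
          MvPolynomial.eval a (MvPolynomial.pderiv (Fin.castLE hnN k) (f i))))) :
    p ^ (N - n) * Mcount p n N σ ν hnN f ≤ Mcount p n N σ (ν + 1) hnN f := by
  exact Stmt5Aux.key p hp σ ν hσ hnN f
end

section
/- If M(σ, 0) > 0 and N ≥ n, then for every integer ν ≥ 0 one has M(σ, ν) ≥ p^{(N-n)ν} M(σ, 0). -/
open MvPolynomial Matrix

lemma mv_taylor {N : ℕ} (a u : Fin N → ℤ) (q : ℤ) (g : MvPolynomial (Fin N) ℤ) :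
    ∃ k : ℤ, eval (fun j => a j + q * u j) g =
      eval a g + q * (∑ j, u j * eval a (pderiv j g)) + q ^ 2 * k := by
  induction g using MvPolynomial.induction_on with
  | C r => exact ⟨0, by simp⟩
  | add g h hg hh =>
    obtain ⟨k1, hk1⟩ := hg
    obtain ⟨k2, hk2⟩ := hh
    exact ⟨k1 + k2, by simp [hk1, hk2, mul_add, Finset.sum_add_distrib]; ring⟩
  | mul_X g j hg =>
    obtain ⟨k, hk⟩ := hg
    refine ⟨k * a j + u j * (∑ i, u i * eval a (pderiv i g)) + q * u j * k, ?_⟩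
    have hsum : ∀ i : Fin N, u i * eval a (pderiv i (g * X j)) =
        (u i * eval a (pderiv i g)) * a j + (if i = j then u i * eval a g else 0) := by
      intro i
      rcases eq_or_ne i j with h | h <;> simp [pderiv_mul, pderiv_X, h, Pi.single_apply] <;> ring
    simp only [eval_mul, eval_X, hk, hsum, Finset.sum_add_distrib, Finset.sum_ite_eq',
      Finset.mem_univ, if_true, ← Finset.sum_mul]
    ring

lemma mv_congr {N : ℕ} (a a' : Fin N → ℤ) (d : ℤ) (h : ∀ j, d ∣ a' j - a j)
    (g : MvPolynomial (Fin N) ℤ) : d ∣ eval a' g - eval a g := by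
  obtain ⟨k, hk⟩ := mv_taylor a (fun j => (a' j - a j) / d) d g
  have ha : (fun j => a j + d * ((a' j - a j) / d)) = a' := by
    funext j
    have := Int.ediv_mul_cancel (h j)
    nlinarith [this]
  rw [ha] at hk
  rw [hk]
  have : eval a g + d * (∑ j, (a' j - a j)/d * eval a (pderiv j g)) + d^2*k - eval a g
      = d * ((∑ j, (a' j - a j)/d * eval a (pderiv j g)) + d * k) := by ring
  rw [this]
  exact Dvd.intro _ rfl

lemma det_congr {n : ℕ} (M M' : Matrix (Fin n) (Fin n) ℤ) (q : ℕ)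
    (h : ∀ i j, (q : ℤ) ∣ M i j - M' i j) : (q : ℤ) ∣ M.det - M'.det := by
  have h2 : ∀ (A : Matrix (Fin n) (Fin n) ℤ),
      ((A.det : ℤ) : ZMod q) = (A.map (fun x : ℤ => (x : ZMod q))).det := by
    intro A
    rw [show (fun x : ℤ => (x : ZMod q)) = ⇑(Int.castRingHom (ZMod q)) from rfl,
      ← RingHom.mapMatrix_apply, ← RingHom.map_det]
    rfl
  rw [← ZMod.intCast_zmod_eq_zero_iff_dvd, Int.cast_sub, h2, h2, sub_eq_zero]
  congr 1
  ext i j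
  have := h i j
  rw [← ZMod.intCast_zmod_eq_zero_iff_dvd, Int.cast_sub, sub_eq_zero] at this
  simpa using this

lemma lift_mem (p : ℕ) (hp : p.Prime) (σ n N ν : ℕ) (hσ : 1 ≤ σ) (hnN : n ≤ N)
    (f : Fin n → MvPolynomial (Fin N) ℤ) (A t : Fin N → ℤ)
    (ht : ∀ j : Fin N, (j : ℕ) < n → t j = 0)
    (hsol : ∀ i, ((p:ℤ) ^ (2*σ-1+ν)) ∣ eval A (f i))
    (hd1 : ((p:ℤ))^(σ-1) ∣ (Matrix.of fun i k : Fin n =>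
        eval A (pderiv (Fin.castLE hnN k) (f i))).det)
    (hd2 : ¬ ((p:ℤ))^σ ∣ (Matrix.of fun i k : Fin n =>
        eval A (pderiv (Fin.castLE hnN k) (f i))).det) :
    ∃ B : Fin N → ℤ,
      (∀ j : Fin N, (j:ℕ) < n → ∃ u : ℤ, B j = A j + (p:ℤ)^(σ+ν) * u) ∧
      (∀ j : Fin N, n ≤ (j:ℕ) → B j = A j + (p:ℤ)^(2*σ-1+ν) * t j) ∧
      (∀ i, ((p:ℤ) ^ (2*σ-1+ν+1)) ∣ eval B (f i)) ∧
      ((p:ℤ)^(σ-1) ∣ (Matrix.of fun i k : Fin n =>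
          eval B (pderiv (Fin.castLE hnN k) (f i))).det) ∧
      ¬ ((p:ℤ)^σ ∣ (Matrix.of fun i k : Fin n =>
          eval B (pderiv (Fin.castLE hnN k) (f i))).det) := by
  set J : Matrix (Fin n) (Fin n) ℤ := Matrix.of fun i k : Fin n =>
      eval A (pderiv (Fin.castLE hnN k) (f i)) with hJ
  set d : ℤ := J.det with hdd
  set e : ℤ := d / (p:ℤ)^(σ-1) with he
  have hde : d = (p:ℤ)^(σ-1) * e := (Int.mul_ediv_cancel' hd1).symm
  have hps : (p:ℤ)^σ = (p:ℤ)^(σ-1) * p := by rw [← pow_succ]; congr 1; omega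
  have hpe : ¬ (p:ℤ) ∣ e := by
    intro hdvd
    apply hd2
    obtain ⟨cc, hcc⟩ := hdvd
    exact ⟨cc, by rw [hde, hcc, hps]; ring⟩
  have hcop : IsCoprime e ((p:ℤ)^σ) :=
    (((Prime.coprime_iff_not_dvd (Nat.prime_iff_prime_int.1 hp)).2 hpe).pow_left).symm
  obtain ⟨e', v, hee⟩ := hcop
  set c : Fin n → ℤ := fun i => eval A (f i) / (p:ℤ)^(2*σ-1+ν) with hcdef
  have hc : ∀ i, (p:ℤ)^(2*σ-1+ν) * c i = eval A (f i) := fun i => Int.mul_ediv_cancel' (hsol i)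
  set w : Fin n → ℤ := fun i => c i + ∑ j : Fin N, t j * eval A (pderiv j (f i)) with hw
  set t1 : Fin n → ℤ := (-e') • (J.adjugate.mulVec w) with ht1
  set U : Fin N → ℤ := fun j => (if h : (j:ℕ) < n then t1 ⟨j, h⟩ else 0) + (p:ℤ)^(σ-1) * t j
    with hU
  have hpow1 : (p:ℤ)^(σ+ν) * (p:ℤ)^(σ-1) = (p:ℤ)^(2*σ-1+ν) := by
    rw [← pow_add]; congr 1; omega
  set B : Fin N → ℤ := fun j => A j + (p:ℤ)^(σ+ν) * U j with hB
  have hBA : ∀ j, B j - A j = (p:ℤ)^(σ+ν) * U j := fun j => by rw [hB]; ring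
  refine ⟨B, fun j hj => ⟨U j, rfl⟩, ?_, ?_, ?_, ?_⟩
  · intro j hj
    have hUj : U j = (p:ℤ)^(σ-1) * t j := by
      rw [hU]; simp only [dif_neg (by omega : ¬ (j:ℕ) < n), zero_add]
    show A j + (p:ℤ)^(σ+ν) * U j = _
    rw [hUj, ← mul_assoc, hpow1]
  · intro i
    obtain ⟨k, hk⟩ := mv_taylor A U ((p:ℤ)^(σ+ν)) (f i)
    rw [show eval B (f i) = eval (fun j => A j + (p:ℤ)^(σ+ν) * U j) (f i) from rfl, hk]
    have hJt1' : ∀ i', (J.mulVec t1) i' = -(e' * (d * w i')) := by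
      intro i'
      rw [ht1, Matrix.mulVec_smul, Matrix.mulVec_mulVec, Matrix.mul_adjugate]
      simp [Matrix.smul_mulVec, Matrix.one_mulVec, ← hdd]
    have hsum : (∑ j : Fin N, U j * eval A (pderiv j (f i))) =
        (J.mulVec t1) i + (p:ℤ)^(σ-1) * (∑ j : Fin N, t j * eval A (pderiv j (f i))) := by
      have h1 : (∑ j : Fin N, U j * eval A (pderiv j (f i))) =
          (∑ j : Fin N, (if h : (j:ℕ) < n then t1 ⟨j, h⟩ else 0) * eval A (pderiv j (f i)))
          + (p:ℤ)^(σ-1) * (∑ j : Fin N, t j * eval A (pderiv j (f i))) := by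
        rw [Finset.mul_sum, ← Finset.sum_add_distrib]
        refine Finset.sum_congr rfl fun j _ => by rw [hU]; ring
      rw [h1]
      congr 1
      have h2 : (∑ j : Fin N, (if h : (j:ℕ) < n then t1 ⟨j, h⟩ else 0) * eval A (pderiv j (f i)))
          = ∑ j ∈ Finset.univ.map ⟨Fin.castLE hnN, Fin.castLE_injective hnN⟩,
              (if h : (j:ℕ) < n then t1 ⟨j, h⟩ else 0) * eval A (pderiv j (f i)) := by
        refine (Finset.sum_subset (Finset.subset_univ _) ?_).symm
        intro j _ hj
        have hjn : ¬ (j:ℕ) < n := by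
          intro hlt
          exact hj (by simp only [Finset.mem_map, Finset.mem_univ, Function.Embedding.coeFn_mk]
                       exact ⟨⟨(j:ℕ), hlt⟩, trivial, by ext; simp⟩)
        rw [dif_neg hjn, zero_mul]
      rw [h2, Finset.sum_map]
      simp only [Function.Embedding.coeFn_mk]
      rw [Matrix.mulVec, dotProduct]
      refine Finset.sum_congr rfl fun kk _ => ?_
      have hk' : ((Fin.castLE hnN kk : Fin N) : ℕ) < n := by simp [kk.isLt]
      rw [dif_pos hk']
      have heq : (⟨((Fin.castLE hnN kk : Fin N) : ℕ), hk'⟩ : Fin n) = kk := by ext; simp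
      rw [heq, hJ]
      simp [mul_comm]
    rw [hsum, hJt1' i]
    have hwi : w i = c i + ∑ j : Fin N, t j * eval A (pderiv j (f i)) := by rw [hw]
    have ha1 : (p:ℤ)^(σ+ν) = (p:ℤ)^(σ-1) * (p:ℤ)^(ν+1) := by
      rw [← pow_add]; congr 1; omega
    have ha2 : (p:ℤ)^(2*σ-1+ν) = (p:ℤ)^(σ-1) * (p:ℤ)^(σ-1) * (p:ℤ)^(ν+1) := by
      rw [← pow_add, ← pow_add]; congr 1; omega
    have key : eval A (f i) + (p:ℤ)^(σ+ν) * (-(e' * (d * w i))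
          + (p:ℤ)^(σ-1) * (∑ j : Fin N, t j * eval A (pderiv j (f i))))
        = (p:ℤ)^(σ+ν) * ((p:ℤ)^(σ-1) * (w i * (v * (p:ℤ)^σ))) := by
      rw [← hc i, hde, ha1, ha2]
      linear_combination (-((p:ℤ)^(σ-1)*(p:ℤ)^(σ-1)*(p:ℤ)^(ν+1))) * hwi +
        (-((p:ℤ)^(σ-1)*(p:ℤ)^(σ-1)*(p:ℤ)^(ν+1)*(w i))) * hee
    rw [key]
    have hE : (p:ℤ)^(σ+ν) * (p:ℤ)^(σ-1) * (p:ℤ)^σ = (p:ℤ)^(2*σ-1+ν+1) * (p:ℤ)^(σ-1) := by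
      rw [← pow_add, ← pow_add, ← pow_add]; congr 1; omega
    refine dvd_add ⟨(p:ℤ)^(σ-1) * (w i * v), by linear_combination (w i * v) * hE⟩ ?_
    refine dvd_mul_of_dvd_left ?_ k
    rw [← pow_mul]
    exact pow_dvd_pow _ (by omega)
  · have hcong : (p:ℤ)^(σ-1) ∣ (Matrix.of fun i k : Fin n =>
        eval B (pderiv (Fin.castLE hnN k) (f i))).det - d := by
      refine dvd_trans (pow_dvd_pow _ (by omega : σ-1 ≤ σ+ν)) ?_
      have := det_congr (Matrix.of fun i k : Fin n => eval B (pderiv (Fin.castLE hnN k) (f i)))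
        J (p^(σ+ν)) ?_
      · rwa [Nat.cast_pow] at this
      · intro i k
        rw [Nat.cast_pow]
        exact mv_congr A B _ (fun j => by rw [hBA j]; exact Dvd.intro _ rfl) _
    obtain ⟨z, hz⟩ := hcong
    exact ⟨e + z, by linear_combination hz + hde⟩
  · intro hdvd
    apply hd2
    have hcong : (p:ℤ)^σ ∣ (Matrix.of fun i k : Fin n =>
        eval B (pderiv (Fin.castLE hnN k) (f i))).det - d := by
      refine dvd_trans (pow_dvd_pow _ (by omega : σ ≤ σ+ν)) ?_
      have := det_congr (Matrix.of fun i k : Fin n => eval B (pderiv (Fin.castLE hnN k) (f i)))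
        J (p^(σ+ν)) ?_
      · rwa [Nat.cast_pow] at this
      · intro i k
        rw [Nat.cast_pow]
        exact mv_congr A B _ (fun j => by rw [hBA j]; exact Dvd.intro _ rfl) _
    have := dvd_sub hdvd hcong
    simpa using this

lemma step (p : ℕ) (hp : p.Prime) (σ n N ν : ℕ) (hσ : 1 ≤ σ) (hnN : n ≤ N)
    (f : Fin n → MvPolynomial (Fin N) ℤ) :
    p ^ (N - n) * Mcount p n N σ ν hnN f ≤ Mcount p n N σ (ν + 1) hnN f := by
  classical
  have hpne : p ≠ 0 := hp.pos.ne'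
  haveI i1 : NeZero (p ^ (2*σ-1+ν)) := ⟨pow_ne_zero _ hpne⟩
  haveI i2 : NeZero (p ^ (2*σ-1+(ν+1))) := ⟨pow_ne_zero _ hpne⟩
  haveI i3 : NeZero p := ⟨hpne⟩
  set G₁ : (Fin N → ZMod (p ^ (2*σ-1+ν))) → (Fin N → ZMod (p ^ (2*σ-1+ν))) :=
    fun a j => if (j : ℕ) < n then (p : ZMod (p ^ (2*σ-1+ν))) ^ (σ-1) * a j else a j with hG₁
  set S₁ : Set (Fin N → ZMod (p ^ (2*σ-1+ν))) :=
    {a | (∀ i, ((p : ℤ) ^ (2*σ-1+ν)) ∣ eval (fun j => ((a j).val : ℤ)) (f i)) ∧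
      ((p : ℤ) ^ (σ-1) ∣ (Matrix.of fun i k : Fin n =>
          eval (fun j => ((a j).val : ℤ)) (pderiv (Fin.castLE hnN k) (f i))).det) ∧
      ¬ ((p : ℤ) ^ σ ∣ (Matrix.of fun i k : Fin n =>
          eval (fun j => ((a j).val : ℤ)) (pderiv (Fin.castLE hnN k) (f i))).det)} with hS₁
  set G₂ : (Fin N → ZMod (p ^ (2*σ-1+(ν+1)))) → (Fin N → ZMod (p ^ (2*σ-1+(ν+1)))) :=
    fun a j => if (j : ℕ) < n then (p : ZMod (p ^ (2*σ-1+(ν+1)))) ^ (σ-1) * a j else a j with hG₂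
  set S₂ : Set (Fin N → ZMod (p ^ (2*σ-1+(ν+1)))) :=
    {a | (∀ i, ((p : ℤ) ^ (2*σ-1+(ν+1))) ∣ eval (fun j => ((a j).val : ℤ)) (f i)) ∧
      ((p : ℤ) ^ (σ-1) ∣ (Matrix.of fun i k : Fin n =>
          eval (fun j => ((a j).val : ℤ)) (pderiv (Fin.castLE hnN k) (f i))).det) ∧
      ¬ ((p : ℤ) ^ σ ∣ (Matrix.of fun i k : Fin n =>
          eval (fun j => ((a j).val : ℤ)) (pderiv (Fin.castLE hnN k) (f i))).det)} with hS₂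
  have hWex : ∀ s : ↥(G₁ '' S₁), ∃ x, x ∈ S₁ ∧ G₁ x = s.1 := fun s => s.2
  choose W hW1 hW2 using hWex
  -- main existence statement
  have main : ∀ (s : ↥(G₁ '' S₁)) (tt : {j : Fin N // n ≤ (j:ℕ)} → ZMod p),
      ∃ y : ↥(G₂ '' S₂),
        (∀ (j : Fin N) (hj : n ≤ (j:ℕ)), y.1 j =
          (((((W s) j).val : ℤ) + (p:ℤ)^(2*σ-1+ν) * ((tt ⟨j, hj⟩).val : ℤ) : ℤ) :
            ZMod (p ^ (2*σ-1+(ν+1))))) ∧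
        (∀ (j : Fin N), (j:ℕ) < n → ∃ u : ℤ, y.1 j =
          (((p:ℤ)^(σ-1) * ((((W s) j).val : ℤ) + (p:ℤ)^(σ+ν) * u) : ℤ) :
            ZMod (p ^ (2*σ-1+(ν+1))))) := by
    intro s tt
    set a := W s with ha
    set A : Fin N → ℤ := fun j => ((a j).val : ℤ) with hA
    set t : Fin N → ℤ := fun j => if h : n ≤ (j:ℕ) then ((tt ⟨j, h⟩).val : ℤ) else 0 with htdef
    have haS := hW1 s
    rw [hS₁] at haS
    obtain ⟨B, hB1, hB2, hB3, hB4, hB5⟩ :=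
      lift_mem p hp σ n N ν hσ hnN f A t
        (fun j hj => dif_neg (by omega)) haS.1 haS.2.1 haS.2.2
    set b : Fin N → ZMod (p ^ (2*σ-1+(ν+1))) := fun j => ((B j : ℤ) : ZMod _) with hb
    have hpow : ((p : ℤ) ^ (2*σ-1+(ν+1))) = ((p : ℤ) ^ (2*σ-1+ν+1)) := by congr 1 <;> omega
    have hbB : ∀ j, ((p:ℤ) ^ (2*σ-1+(ν+1))) ∣ ((b j).val : ℤ) - B j := by
      intro j
      have : ((((b j).val : ℤ) - B j : ℤ) : ZMod (p ^ (2*σ-1+(ν+1)))) = 0 := by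
        push_cast
        try simp [hb]
      have h2 := (ZMod.intCast_zmod_eq_zero_iff_dvd _ _).1 this
      rwa [Nat.cast_pow] at h2
    have hbS : b ∈ S₂ := by
      rw [hS₂]
      refine ⟨fun i => ?_, ?_, ?_⟩
      · have hdiff := mv_congr B (fun j => ((b j).val : ℤ)) _ hbB (f i)
        have := dvd_add (hpow ▸ (hB3 i)) hdiff
        simpa using this
      · have hdiff : ((p:ℤ) ^ (σ-1)) ∣
            (Matrix.of fun i k : Fin n =>
              eval (fun j => ((b j).val : ℤ)) (pderiv (Fin.castLE hnN k) (f i))).det -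
            (Matrix.of fun i k : Fin n =>
              eval B (pderiv (Fin.castLE hnN k) (f i))).det := by
          refine dvd_trans (pow_dvd_pow _ (by omega : σ-1 ≤ 2*σ-1+(ν+1))) ?_
          have hent : ∀ i' k', ((p ^ (2*σ-1+(ν+1)) : ℕ) : ℤ) ∣
              (Matrix.of fun i k : Fin n => eval (fun j => ((b j).val : ℤ))
                (pderiv (Fin.castLE hnN k) (f i))) i' k' -
              (Matrix.of fun i k : Fin n => eval B (pderiv (Fin.castLE hnN k) (f i))) i' k' := by
            intro i' k'
            rw [Nat.cast_pow]
            exact mv_congr B _ _ hbB _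
          have := det_congr _ _ _ hent
          rwa [Nat.cast_pow] at this
        have := dvd_add hB4 hdiff
        simpa using this
      · intro hdvd
        apply hB5
        have hdiff : ((p:ℤ) ^ σ) ∣
            (Matrix.of fun i k : Fin n =>
              eval (fun j => ((b j).val : ℤ)) (pderiv (Fin.castLE hnN k) (f i))).det -
            (Matrix.of fun i k : Fin n =>
              eval B (pderiv (Fin.castLE hnN k) (f i))).det := by
          refine dvd_trans (pow_dvd_pow _ (by omega : σ ≤ 2*σ-1+(ν+1))) ?_
          have hent : ∀ i' k', ((p ^ (2*σ-1+(ν+1)) : ℕ) : ℤ) ∣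
              (Matrix.of fun i k : Fin n => eval (fun j => ((b j).val : ℤ))
                (pderiv (Fin.castLE hnN k) (f i))) i' k' -
              (Matrix.of fun i k : Fin n => eval B (pderiv (Fin.castLE hnN k) (f i))) i' k' := by
            intro i' k'
            rw [Nat.cast_pow]
            exact mv_congr B _ _ hbB _
          have := det_congr _ _ _ hent
          rwa [Nat.cast_pow] at this
        have := dvd_sub hdvd hdiff
        simpa using this
    refine ⟨⟨G₂ b, Set.mem_image_of_mem _ hbS⟩, fun j hj => ?_, fun j hj => ?_⟩
    · show G₂ b j = _
      have h1 : G₂ b j = b j := by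
        simp only [hG₂]
        rw [if_neg (by omega : ¬ (j:ℕ) < n)]
      rw [h1]
      show ((B j : ℤ) : ZMod (p ^ (2*σ-1+(ν+1)))) = _
      have h3 : t j = ((tt ⟨j, hj⟩).val : ℤ) := dif_pos hj
      rw [hB2 j hj, h3]
    · obtain ⟨u, hu⟩ := hB1 j hj
      refine ⟨u, ?_⟩
      show G₂ b j = _
      have h1 : G₂ b j = (p : ZMod (p ^ (2*σ-1+(ν+1))))^(σ-1) * b j := by
        simp only [hG₂]
        rw [if_pos hj]
      rw [h1]
      show (p : ZMod (p ^ (2*σ-1+(ν+1))))^(σ-1) * ((B j : ℤ) : ZMod (p ^ (2*σ-1+(ν+1)))) = _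
      rw [hu]
      simp only [hA]
      push_cast
      ring
  choose Φ hΦ1 hΦ2 using main
  -- reduction homomorphism
  have hdvdM : p ^ (2*σ-1+ν) ∣ p ^ (2*σ-1+(ν+1)) := pow_dvd_pow _ (by omega)
  set r : ZMod (p ^ (2*σ-1+(ν+1))) →+* ZMod (p ^ (2*σ-1+ν)) :=
    ZMod.castHom hdvdM _ with hr
  have hzero : ((p : ZMod (p ^ (2*σ-1+ν))))^(2*σ-1+ν) = 0 := by
    rw [show ((p : ZMod (p ^ (2*σ-1+ν))))^(2*σ-1+ν) = ((p^(2*σ-1+ν) : ℕ) : ZMod (p ^ (2*σ-1+ν)))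
      by push_cast; ring, ZMod.natCast_self]
  have hrec : ∀ s tt j, r ((Φ s tt).1 j) = s.1 j := by
    intro s tt j
    by_cases hj : (j:ℕ) < n
    · obtain ⟨u, hu⟩ := hΦ2 s tt j hj
      rw [hu, map_intCast]
      push_cast
      have hz : ((p : ZMod (p ^ (2*σ-1+ν))))^(σ-1) * ((p : ZMod (p ^ (2*σ-1+ν))))^(σ+ν) = 0 := by
        rw [← pow_add, show (σ-1)+(σ+ν) = 2*σ-1+ν by omega, hzero]
      have := congrFun (hW2 s) j
      simp only [hG₁] at this
      rw [if_pos hj] at this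
      refine Eq.trans ?_ this
      simp [mul_add, ← mul_assoc, hz, ZMod.natCast_val, ZMod.cast_id]
    · have hu := hΦ1 s tt j (by omega)
      rw [hu, map_intCast]
      push_cast
      have := congrFun (hW2 s) j
      simp only [hG₁] at this
      rw [if_neg hj] at this
      refine Eq.trans ?_ this
      simp [hzero, ZMod.natCast_val, ZMod.cast_id]
  -- injectivity
  have hinj : Function.Injective
      (fun z : ↥(G₁ '' S₁) × ({j : Fin N // n ≤ (j:ℕ)} → ZMod p) => Φ z.1 z.2) := by
    rintro ⟨s, tt⟩ ⟨s', tt'⟩ h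
    simp only at h
    have hss : s = s' := by
      refine Subtype.ext (funext fun j => ?_)
      rw [← hrec s tt j, ← hrec s' tt' j, h]
    subst hss
    have htt : tt = tt' := by
      funext jj
      have h1 := hΦ1 s tt jj.1 jj.2
      have h2 := hΦ1 s tt' jj.1 jj.2
      have heq : (((((W s) jj.1).val : ℤ) + (p:ℤ)^(2*σ-1+ν) * ((tt ⟨jj.1, jj.2⟩).val : ℤ) : ℤ) :
            ZMod (p ^ (2*σ-1+(ν+1)))) =
          (((((W s) jj.1).val : ℤ) + (p:ℤ)^(2*σ-1+ν) * ((tt' ⟨jj.1, jj.2⟩).val : ℤ) : ℤ) :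
            ZMod (p ^ (2*σ-1+(ν+1)))) := by rw [← h1, ← h2, h]
      have hdvd : ((p^(2*σ-1+(ν+1)) : ℕ) : ℤ) ∣
          ((((W s) jj.1).val : ℤ) + (p:ℤ)^(2*σ-1+ν) * ((tt ⟨jj.1, jj.2⟩).val : ℤ)) -
          ((((W s) jj.1).val : ℤ) + (p:ℤ)^(2*σ-1+ν) * ((tt' ⟨jj.1, jj.2⟩).val : ℤ)) := by
        rw [← ZMod.intCast_zmod_eq_zero_iff_dvd, Int.cast_sub, sub_eq_zero, heq]
      have hdvd2 : (p:ℤ) ∣ ((tt ⟨jj.1, jj.2⟩).val : ℤ) - ((tt' ⟨jj.1, jj.2⟩).val : ℤ) := by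
        obtain ⟨z, hz⟩ := hdvd
        refine ⟨z, ?_⟩
        have hcan : (p:ℤ)^(2*σ-1+ν) * (((tt ⟨jj.1, jj.2⟩).val : ℤ) - ((tt' ⟨jj.1, jj.2⟩).val : ℤ))
            = (p:ℤ)^(2*σ-1+ν) * ((p:ℤ) * z) := by
          rw [show ((p^(2*σ-1+(ν+1)) : ℕ) : ℤ) = (p:ℤ)^(2*σ-1+ν) * (p:ℤ) by
            push_cast; rw [← pow_succ]; congr 1 <;> omega] at hz
          linear_combination hz
        exact mul_left_cancel₀ (pow_ne_zero _ (by exact_mod_cast hpne)) hcan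
      have : ((tt ⟨jj.1, jj.2⟩ : ZMod p)) = tt' ⟨jj.1, jj.2⟩ := by
        have h3 : (((tt ⟨jj.1, jj.2⟩).val : ℤ) : ZMod p) = (((tt' ⟨jj.1, jj.2⟩).val : ℤ) : ZMod p) := by
          rw [← sub_eq_zero, ← Int.cast_sub, ZMod.intCast_zmod_eq_zero_iff_dvd]
          exact_mod_cast hdvd2
        simpa using h3
      simpa using this
    rw [htt]
  -- cardinality bookkeeping
  have hcardT : Nat.card ({j : Fin N // n ≤ (j:ℕ)} → ZMod p) = p ^ (N - n) := by
    rw [Nat.card_fun, Nat.card_zmod]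
    congr 1
    have e : {j : Fin N // n ≤ (j:ℕ)} ≃ Fin (N - n) :=
      { toFun := fun j => ⟨j.1.1 - n, by have := j.1.isLt; have := j.2; omega⟩
        invFun := fun k => ⟨⟨n + k.1, by have := k.isLt; omega⟩, by simp⟩
        left_inv := fun j => Subtype.ext (Fin.ext (by have := j.2; simp; omega))
        right_inv := fun k => Fin.ext (by simp) }
    rw [Nat.card_congr e, Nat.card_eq_fintype_card, Fintype.card_fin]
  calc p ^ (N - n) * Nat.card ↥(G₁ '' S₁)
      = Nat.card (↥(G₁ '' S₁) × ({j : Fin N // n ≤ (j:ℕ)} → ZMod p)) := by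
        rw [Nat.card_prod, hcardT]; ring
    _ ≤ Nat.card ↥(G₂ '' S₂) := Nat.card_le_card_of_injective _ hinj

/-- Lemma 3.1: if `M(σ,0) > 0` and `N ≥ n`, then `M(σ,ν) ≥ p^((N-n)ν) · M(σ,0)`
for every `ν ≥ 0`. -/
theorem stmt_6 (p : ℕ) (hp : p.Prime) (σ n N : ℕ) (hσ : 1 ≤ σ) (hnN : n ≤ N)
    (f : Fin n → MvPolynomial (Fin N) ℤ)
    (h0 : 0 < Mcount p n N σ 0 hnN f) :
    ∀ ν : ℕ, p ^ ((N - n) * ν) * Mcount p n N σ 0 hnN f ≤ Mcount p n N σ ν hnN f := by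
  intro ν
  induction ν with
  | zero => simpa using le_refl (Mcount p n N σ 0 hnN f)
  | succ ν ih =>
    calc p ^ ((N - n) * (ν + 1)) * Mcount p n N σ 0 hnN f
        = p ^ (N - n) * (p ^ ((N - n) * ν) * Mcount p n N σ 0 hnN f) := by ring
      _ ≤ p ^ (N - n) * Mcount p n N σ ν hnN f := Nat.mul_le_mul_left _ ih
      _ ≤ Mcount p n N σ (ν + 1) hnN f := step p hp σ n N ν hσ hnN f
end

section
/- If x̄ = (x_1, ..., x_m) is a point with x_1, ..., x_m linearly dependent over ℚ and lying on the variety Φ_j^{(ρ)}(x̄) = 0 for all j, ρ, then x̄ is a singular point, i.e. the Jacobian matrix L(x̄) of the system (Φ_j^{(ρ)}) with respect to the variables has rank at most Rr - 1. -/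
open Finset Matrix

/-- If a nonzero vector is in the left kernel of `M`, then `rank M ≤ #rows - 1`. -/
lemma aux_rank_le_pred_of_vecMul_eq_zero {n p : Type*} [Fintype n] [Fintype p]
    [DecidableEq n] [DecidableEq p]
    (M : Matrix n p ℚ) (v : n → ℚ) (hv : v ≠ 0) (h : Matrix.vecMul v M = 0) :
    M.rank ≤ Fintype.card n - 1 := by
  classical
  have hker : v ∈ LinearMap.ker Mᵀ.mulVecLin := by
    rw [LinearMap.mem_ker, Matrix.mulVecLin_apply, Matrix.mulVec_transpose, h]
  have hnt : Nontrivial (LinearMap.ker Mᵀ.mulVecLin) :=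
    ⟨⟨⟨v, hker⟩, 0, by simpa [Subtype.ext_iff] using hv⟩⟩
  have hpos : 0 < Module.finrank ℚ (LinearMap.ker Mᵀ.mulVecLin) :=
    Module.finrank_pos_iff.mpr hnt
  have hrn := LinearMap.finrank_range_add_finrank_ker (Mᵀ.mulVecLin)
  have hdom : Module.finrank ℚ (n → ℚ) = Fintype.card n := Module.finrank_pi ℚ
  have hMt : Mᵀ.rank = Module.finrank ℚ (LinearMap.range Mᵀ.mulVecLin) := rfl
  have : Mᵀ.rank ≤ Fintype.card n - 1 := by
    omega
  simpa [Matrix.rank_transpose] using this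

/-- Summing an `Sₙ`-invariant function over all tuples equals summing over
non-decreasing tuples weighted by orbit sizes. -/
lemma aux_sum_orbit {m d : ℕ} (F : (Fin d → Fin m) → ℚ)
    (hF : ∀ (g : Fin d → Fin m) (σ : Equiv.Perm (Fin d)), F (g ∘ σ) = F g) :
    ∑ j : {j : Fin d → Fin m // ∀ a b : Fin d, a ≤ b → j a ≤ j b},
      (((Finset.univ.filter (fun g : Fin d → Fin m =>
          ∃ σ : Equiv.Perm (Fin d), g = j.1 ∘ σ)).card : ℚ)) * F j.1
      = ∑ g : Fin d → Fin m, F g := by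
  classical
  let φ : (Fin d → Fin m) → {j : Fin d → Fin m // ∀ a b : Fin d, a ≤ b → j a ≤ j b} :=
    fun g => ⟨g ∘ Tuple.sort g, fun a b hab => Tuple.monotone_sort g hab⟩
  have hfib : ∀ j : {j : Fin d → Fin m // ∀ a b : Fin d, a ≤ b → j a ≤ j b},
      (Finset.univ.filter fun g : Fin d → Fin m => φ g = j)
      = Finset.univ.filter (fun g => ∃ σ : Equiv.Perm (Fin d), g = j.1 ∘ σ) := by
    intro j
    ext g
    simp only [Finset.mem_filter, Finset.mem_univ, true_and]
    constructor
    · rintro rfl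
      refine ⟨(Tuple.sort g)⁻¹, ?_⟩
      funext k
      simp [φ]
    · rintro ⟨σ, rfl⟩
      have hmono : Monotone j.1 := fun a b hab => j.2 a b hab
      have h1 : (j.1 ∘ σ) ∘ Tuple.sort (j.1 ∘ σ) = j.1 ∘ Tuple.sort j.1 :=
        Tuple.comp_perm_comp_sort_eq_comp_sort
      have h2 : j.1 ∘ Tuple.sort j.1 = j.1 := by
        have := Tuple.unique_monotone (f := j.1) (σ := Tuple.sort j.1) (τ := Equiv.refl _)
          (Tuple.monotone_sort j.1) (by simpa using hmono)
        simpa using this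
      exact Subtype.ext (h1.trans h2)
  rw [← Finset.sum_fiberwise Finset.univ φ F]
  refine Finset.sum_congr rfl fun j _ => ?_
  rw [hfib j]
  have hconst : ∀ g ∈ Finset.univ.filter
      (fun g : Fin d → Fin m => ∃ σ : Equiv.Perm (Fin d), g = j.1 ∘ σ), F g = F j.1 := by
    intro g hg
    rcases (Finset.mem_filter.mp hg).2 with ⟨σ, rfl⟩
    exact hF j.1 σ
  rw [Finset.sum_congr rfl hconst, Finset.sum_const, nsmul_eq_mul]

/-- If `x̄ = (x₁,…,xₘ)` lies on the variety `Φⱼ^(ρ)(x̄) = 0` (for all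
non-decreasing tuples `j` and all `ρ`) and `x₁,…,xₘ` are linearly dependent
over `ℚ`, then `x̄` is a singular point: the `Rr × ms` Jacobian matrix `L(x̄)`
of the system has rank at most `Rr - 1`. -/
theorem stmt_10 (s m d R : ℕ) (hd : 2 ≤ d)
    (Φ : Fin R → MultilinearMap ℚ (fun _ : Fin d => (Fin s → ℚ)) ℚ)
    (hsym : ∀ ρ (σ : Equiv.Perm (Fin d)) (v : Fin d → Fin s → ℚ), Φ ρ (v ∘ σ) = Φ ρ v)
    (x : Fin m → Fin s → ℚ)
    (hdep : ¬ LinearIndependent ℚ x)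
    (hzero : ∀ (ρ : Fin R) (j : {j : Fin d → Fin m // ∀ a b : Fin d, a ≤ b → j a ≤ j b}),
      Φ ρ (fun k => x (j.1 k)) = 0) :
    Matrix.rank (Matrix.of fun
        (ρj : Fin R × {j : Fin d → Fin m // ∀ a b : Fin d, a ≤ b → j a ≤ j b})
        (iN : Fin m × Fin s) =>
        (((Finset.univ.filter (fun g : Fin d → Fin m =>
            ∃ σ : Equiv.Perm (Fin d), g = ρj.2.1 ∘ σ)).card : ℚ)) *
          ∑ k : Fin d, if ρj.2.1 k = iN.1 then
            Φ ρj.1 (Function.update (fun l => x (ρj.2.1 l)) k (Pi.single iN.2 1)) else 0)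
      ≤ R * Fintype.card {j : Fin d → Fin m // ∀ a b : Fin d, a ≤ b → j a ≤ j b} - 1 := by
  classical
  obtain ⟨c, hsum, i0, hc0⟩ := Fintype.not_linearIndependent_iff.mp hdep
  rcases Nat.eq_zero_or_pos R with hR | hR
  · subst hR
    refine le_trans (le_trans (Matrix.rank_le_card_height _) ?_) (Nat.zero_le _)
    simp
  set M : Matrix (Fin R × {j : Fin d → Fin m // ∀ a b : Fin d, a ≤ b → j a ≤ j b})
      (Fin m × Fin s) ℚ := Matrix.of fun ρj iN =>
        (((Finset.univ.filter (fun g : Fin d → Fin m =>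
            ∃ σ : Equiv.Perm (Fin d), g = ρj.2.1 ∘ σ)).card : ℚ)) *
          ∑ k : Fin d, if ρj.2.1 k = iN.1 then
            Φ ρj.1 (Function.update (fun l => x (ρj.2.1 l)) k (Pi.single iN.2 1)) else 0
    with hM
  set ρ0 : Fin R := ⟨0, hR⟩ with hρ0
  set v : Fin R × {j : Fin d → Fin m // ∀ a b : Fin d, a ≤ b → j a ≤ j b} → ℚ :=
    fun p => if p.1 = ρ0 then ∏ k, c (p.2.1 k) else 0 with hvdef
  have hv0 : v ≠ 0 := by
    intro h
    have h2 := congrFun h (ρ0, ⟨fun _ => i0, fun a b _ => le_refl _⟩)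
    simp only [hvdef, if_pos rfl, Finset.prod_const, Finset.card_univ, Fintype.card_fin, Pi.zero_apply] at h2
    exact hc0 (pow_eq_zero_iff (by omega : d ≠ 0) |>.mp h2)
  have hmul : Matrix.vecMul v M = 0 := by
    funext iN
    obtain ⟨i, N⟩ := iN
    show ∑ p, v p * M p (i, N) = 0
    rw [Fintype.sum_prod_type]
    have hpick : ∀ j : {j : Fin d → Fin m // ∀ a b : Fin d, a ≤ b → j a ≤ j b},
        ∑ ρ : Fin R, v (ρ, j) * M (ρ, j) (i, N)
          = (∏ k, c (j.1 k)) * M (ρ0, j) (i, N) := by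
      intro j
      rw [Finset.sum_eq_single ρ0]
      · simp [hvdef]
      · intro ρ _ hρ; simp [hvdef, hρ]
      · simp
    rw [Finset.sum_comm]
    calc ∑ j : {j : Fin d → Fin m // ∀ a b : Fin d, a ≤ b → j a ≤ j b},
          ∑ ρ : Fin R, v (ρ, j) * M (ρ, j) (i, N)
        = ∑ j : {j : Fin d → Fin m // ∀ a b : Fin d, a ≤ b → j a ≤ j b},
            (((Finset.univ.filter (fun g : Fin d → Fin m =>
              ∃ σ : Equiv.Perm (Fin d), g = j.1 ∘ σ)).card : ℚ)) *
            ((∏ k, c (j.1 k)) *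
              ∑ k : Fin d, if j.1 k = i then
                Φ ρ0 (Function.update (fun l => x (j.1 l)) k (Pi.single N 1)) else 0) := by
          refine Finset.sum_congr rfl fun j _ => ?_
          rw [hpick j]
          simp only [hM, Matrix.of_apply]
          ring
      _ = ∑ g : Fin d → Fin m, ((∏ k, c (g k)) *
              ∑ k : Fin d, if g k = i then
                Φ ρ0 (Function.update (fun l => x (g l)) k (Pi.single N 1)) else 0) := by
          refine aux_sum_orbit (fun g => (∏ k, c (g k)) *
              ∑ k : Fin d, if g k = i then
                Φ ρ0 (Function.update (fun l => x (g l)) k (Pi.single N 1)) else 0) ?_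
          intro g σ
          have hprod : (∏ k, c (g (σ k))) = ∏ k, c (g k) :=
            Equiv.prod_comp σ (fun k => c (g k))
          have hsumeq : (∑ k : Fin d, if g (σ k) = i then
                Φ ρ0 (Function.update (fun l => x (g (σ l))) k (Pi.single N 1)) else 0)
              = ∑ k : Fin d, if g k = i then
                Φ ρ0 (Function.update (fun l => x (g l)) k (Pi.single N 1)) else 0 := by
            rw [← Equiv.sum_comp σ (fun k => if g k = i then
                Φ ρ0 (Function.update (fun l => x (g l)) k (Pi.single N 1)) else 0)]
            refine Finset.sum_congr rfl fun k _ => ?_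
            by_cases h : g (σ k) = i
            · simp only [if_pos h]
              have hc := Function.update_comp_equiv (fun l => x (g l)) (σ : Equiv.Perm (Fin d))
                (σ k) (Pi.single N 1)
              rw [Equiv.symm_apply_apply] at hc
              have harg : Function.update (fun l => x (g (σ l))) k (Pi.single N 1)
                  = Function.update (fun l => x (g l)) (σ k) (Pi.single N 1) ∘ ⇑σ := by
                rw [hc]; rfl
              rw [harg]
              exact hsym ρ0 σ _
            · simp [h]
          simp only [Function.comp_apply]
          rw [hprod, hsumeq]
      _ = 0 := by
          have key : ∀ g : Fin d → Fin m, ((∏ k, c (g k)) *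
              ∑ k : Fin d, if g k = i then
                Φ ρ0 (Function.update (fun l => x (g l)) k (Pi.single N 1)) else 0)
            = ∑ k : Fin d, Φ ρ0 (fun l =>
                if l = k then (if g k = i then c (g k) • (Pi.single N 1 : Fin s → ℚ) else 0)
                else c (g l) • x (g l)) := by
            intro g
            rw [Finset.mul_sum]
            refine Finset.sum_congr rfl fun k _ => ?_
            have heq : (fun l => if l = k then
                  (if g k = i then c (g k) • (Pi.single N 1 : Fin s → ℚ) else 0)
                  else c (g l) • x (g l))
                = fun l => c (g l) • Function.update (fun l' => x (g l')) k
                    (if g k = i then Pi.single N 1 else 0) l := by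
              funext l
              by_cases hl : l = k
              · subst hl
                by_cases h : g l = i <;> simp [h, Function.update_self]
              · simp [hl, Function.update_of_ne hl]
            rw [heq, MultilinearMap.map_smul_univ]
            by_cases h : g k = i
            · simp [h, smul_eq_mul]
            · simp [h, smul_eq_mul, (Φ ρ0).map_update_zero]
          rw [Finset.sum_congr rfl (fun g _ => key g), Finset.sum_comm]
          refine Finset.sum_eq_zero fun k _ => ?_
          have hms := (Φ ρ0).map_sum (g := fun l (i' : Fin m) =>
              if l = k then (if i' = i then c i' • (Pi.single N 1 : Fin s → ℚ) else 0)
              else c i' • x i')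
          have hrew : ∀ g : Fin d → Fin m, (fun l =>
                if l = k then (if g k = i then c (g k) • (Pi.single N 1 : Fin s → ℚ) else 0)
                else c (g l) • x (g l))
              = fun l => if l = k then (if g l = i then c (g l) • (Pi.single N 1 : Fin s → ℚ) else 0)
                else c (g l) • x (g l) := by
            intro g; funext l
            by_cases hl : l = k
            · subst hl; rfl
            · simp [hl]
          calc ∑ g : Fin d → Fin m, Φ ρ0 (fun l =>
                if l = k then (if g k = i then c (g k) • (Pi.single N 1 : Fin s → ℚ) else 0)
                else c (g l) • x (g l))
              = ∑ g : Fin d → Fin m, Φ ρ0 (fun l =>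
                if l = k then (if g l = i then c (g l) • (Pi.single N 1 : Fin s → ℚ) else 0)
                else c (g l) • x (g l)) := by
                refine Finset.sum_congr rfl fun g _ => ?_
                rw [hrew g]
            _ = Φ ρ0 (fun l => ∑ i' : Fin m,
                if l = k then (if i' = i then c i' • (Pi.single N 1 : Fin s → ℚ) else 0)
                else c i' • x i') := hms.symm
            _ = 0 := by
                have hnt : Nontrivial (Fin d) := Fin.nontrivial_iff_two_le.mpr hd
                obtain ⟨l0, hl0⟩ := exists_ne k
                refine (Φ ρ0).map_coord_zero l0 ?_
                simp only [if_neg hl0]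
                exact hsum
  have hrank := aux_rank_le_pred_of_vecMul_eq_zero M v hv0 hmul
  simpa [Fintype.card_prod] using hrank
end

section
/- Let F be a homogeneous polynomial of degree d over ℤ_p in s variables, and suppose there exists a ∈ ℤ_p^s with F(a) = 0 and ∇F(a) ≠ 0. Then for σ = min over coordinates of the valuation structure (i.e., σ - 1 = v_p of some nonzero coordinate of ∇F(a)), the number Γ(p^ν) of solutions x mod p^ν to F(x) ≡ 0 (mod p^ν) satisfies Γ(p^ν) ≥ p^{(1-2σ)(s-1)} · p^{ν(s-1)} for all ν ≥ 2σ - 1. -/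
open MvPolynomial


variable {R : Type*} [CommRing R] {s : ℕ}

lemma taylor1 (j : Fin s) (F : MvPolynomial (Fin s) R) (x : Fin s → R) (u : R) :
    ∃ k : R, eval (Function.update x j (x j + u)) F
      = eval x F + u * eval x (pderiv j F) + u ^ 2 * k := by
  induction F using MvPolynomial.induction_on with
  | C c => exact ⟨0, by simp⟩
  | add f g hf hg =>
    obtain ⟨k1, h1⟩ := hf; obtain ⟨k2, h2⟩ := hg
    exact ⟨k1 + k2, by simp only [map_add, h1, h2]; ring⟩
  | mul_X f m hf =>
    obtain ⟨k, h⟩ := hf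
    by_cases hm : m = j
    · subst hm
      refine ⟨eval x (pderiv m f) + k * x m + u * k, ?_⟩
      simp only [map_mul, eval_X, pderiv_mul, pderiv_X_self, mul_one, map_add, h,
        Function.update_self]
      ring
    · refine ⟨k * x m, ?_⟩
      simp only [map_mul, eval_X, pderiv_mul, map_add, h,
        Function.update_of_ne hm, pderiv_X_of_ne hm, map_zero, mul_zero, add_zero]
      ring

lemma dvd_eval_sub (c : R) (F : MvPolynomial (Fin s) R) (x y : Fin s → R)
    (h : ∀ j, c ∣ x j - y j) : c ∣ eval x F - eval y F := by
  induction F using MvPolynomial.induction_on with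
  | C d => simp
  | add f g hf hg =>
    have : eval x (f + g) - eval y (f + g)
        = (eval x f - eval y f) + (eval x g - eval y g) := by simp; ring
    rw [this]; exact dvd_add hf hg
  | mul_X f m hf =>
    have : eval x (f * X m) - eval y (f * X m)
        = (eval x f - eval y f) * x m + eval y f * (x m - y m) := by simp; ring
    rw [this]; exact dvd_add (hf.mul_right _) ((h m).mul_left _)

lemma step_dvd (F : MvPolynomial (Fin s) R) (x y : Fin s → R) (c d : R) (hdc : d ∣ c)
    (hxy : ∀ j, c ∣ x j - y j) (hder : ∀ j, d ∣ eval y (pderiv j F)) :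
    c * d ∣ eval x F - eval y F := by
  classical
  have key : ∀ S : Finset (Fin s),
      c * d ∣ eval (fun i => if i ∈ S then x i else y i) F - eval y F := by
    intro S
    induction S using Finset.induction_on with
    | empty => simp
    | @insert j S hjS ih =>
      set z : Fin s → R := fun i => if i ∈ S then x i else y i with hz
      set u : R := x j - y j with hu
      have hupd : (fun i => if i ∈ insert j S then x i else y i)
          = Function.update z j (z j + u) := by
        funext i
        rcases eq_or_ne i j with rfl | hne
        · simp [Function.update_self, hz, hjS, hu]
        · simp [Function.update_of_ne hne, hz, Finset.mem_insert, hne]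
      obtain ⟨k, hk⟩ := taylor1 j F z u
      have hzy : ∀ i, c ∣ z i - y i := by
        intro i; by_cases hi : i ∈ S <;> simp [hz, hi, hxy i]
      obtain ⟨w, hw⟩ := dvd_eval_sub c (pderiv j F) z y hzy
      have hcu : c ∣ u := hxy j
      have expand : eval (Function.update z j (z j + u)) F - eval y F
          = (eval z F - eval y F) + (u * eval y (pderiv j F) + u * (c * w))
            + u * u * k := by
        rw [hk, ← hw]; ring
      rw [hupd, expand]
      refine dvd_add (dvd_add ih (dvd_add ?_ ?_)) ?_
      · exact mul_dvd_mul hcu (hder j)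
      · exact mul_dvd_mul hcu (hdc.mul_right w)
      · exact (mul_dvd_mul hcu ((hdc.trans hcu))).mul_right k
  have := key Finset.univ
  simpa using this

lemma derivative_aeval (n : Fin s) (b : Fin s → R) (F : MvPolynomial (Fin s) R) :
    Polynomial.derivative
        (aeval (fun j => if j = n then Polynomial.X else Polynomial.C (b j)) F)
      = aeval (fun j => if j = n then Polynomial.X else Polynomial.C (b j)) (pderiv n F) := by
  classical
  induction F using MvPolynomial.induction_on with
  | C c => simp
  | add f g hf hg => simp [hf, hg]
  | mul_X f m hf =>
    by_cases hm : m = n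
    · subst hm
      simp only [map_mul, aeval_X, pderiv_mul, pderiv_X_self, mul_one, map_add,
        Polynomial.derivative_mul, hf, Polynomial.derivative_X]
      simp
    · simp only [map_mul, aeval_X, if_neg hm, pderiv_mul, pderiv_X_of_ne hm, mul_zero, add_zero,
        Polynomial.derivative_mul, hf, Polynomial.derivative_C, mul_zero, add_zero, map_add]

lemma eval_aeval (n : Fin s) (b : Fin s → R) (F : MvPolynomial (Fin s) R) (t : R) :
    Polynomial.eval t
        (aeval (fun j => if j = n then Polynomial.X else Polynomial.C (b j)) F)
      = eval (Function.update b n t) F := by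
  classical
  induction F using MvPolynomial.induction_on with
  | C c => simp
  | add f g hf hg => simp [hf, hg]
  | mul_X f m hf =>
    by_cases hm : m = n
    · subst hm
      simp [hf, Function.update_self]
    · simp [hf, hm, Function.update_of_ne hm]


lemma norm_le_pow_iff_dvd' {p : ℕ} [Fact p.Prime] (x : ℤ_[p]) (n : ℕ) :
    ‖x‖ ≤ (p : ℝ) ^ (-(n : ℤ)) ↔ (p : ℤ_[p]) ^ n ∣ x := by
  rw [PadicInt.norm_le_pow_iff_mem_span_pow, Ideal.mem_span_singleton]

lemma toZModPow_eq_zero_iff_dvd {p : ℕ} [Fact p.Prime] (x : ℤ_[p]) (n : ℕ) :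
    PadicInt.toZModPow n x = 0 ↔ (p : ℤ_[p]) ^ n ∣ x := by
  rw [← RingHom.mem_ker, PadicInt.ker_toZModPow, Ideal.mem_span_singleton]

lemma eval_map_toZMod {p : ℕ} [Fact p.Prime] {s : ℕ} (ν : ℕ) (x : Fin s → ℤ_[p])
    (G : MvPolynomial (Fin s) ℤ_[p]) :
    eval (fun j => PadicInt.toZModPow ν (x j)) (map (PadicInt.toZModPow ν) G)
      = PadicInt.toZModPow ν (eval x G) := by
  rw [MvPolynomial.eval_map]
  have h := MvPolynomial.map_eval₂Hom (RingHom.id ℤ_[p]) x (PadicInt.toZModPow ν) G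
  simpa using h.symm

/-- The `m = 1, R = 1` case of Lemma 3.2: if `F ∈ ℤ_p[x₁,…,x_s]` is homogeneous of
degree `d` and there is `a ∈ ℤ_p^s` with `F(a) = 0` and some coordinate of
`∇F(a)` of `p`-adic valuation exactly `σ - 1`, then the number `Γ(p^ν)` of
solutions of `F(x) ≡ 0 (mod p^ν)` satisfies
`Γ(p^ν) ≥ p^((1-2σ)(s-1)) · p^(ν(s-1))` for all `ν ≥ 2σ - 1`. -/
theorem stmt_17 (p : ℕ) [Fact p.Prime] (s d σ : ℕ) (hσ : 1 ≤ σ)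
    (F : MvPolynomial (Fin s) ℤ_[p]) (hF : F.IsHomogeneous d)
    (a : Fin s → ℤ_[p]) (hFa : MvPolynomial.eval a F = 0)
    (hgrad : ∃ n : Fin s,
      ((p : ℤ_[p]) ^ (σ - 1) ∣ MvPolynomial.eval a (MvPolynomial.pderiv n F)) ∧
      ¬ ((p : ℤ_[p]) ^ σ ∣ MvPolynomial.eval a (MvPolynomial.pderiv n F))) :
    ∀ ν : ℕ, 2 * σ - 1 ≤ ν →
      (p : ℝ) ^ (((1 : ℤ) - 2 * σ) * ((s : ℤ) - 1)) * (p : ℝ) ^ ((ν : ℤ) * ((s : ℤ) - 1)) ≤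
        (Nat.card {x : Fin s → ZMod (p ^ ν) //
          MvPolynomial.eval x (MvPolynomial.map (PadicInt.toZModPow ν) F) = 0} : ℝ) := by
  classical
  obtain ⟨n₀, hd₀, hnd₀⟩ := hgrad
  have hp1 : 1 < p := (Fact.out : p.Prime).one_lt
  set g : Fin s → ℤ_[p] := fun j => eval a (pderiv j F) with hg
  have hex : ∃ m : ℕ, ∃ j : Fin s, ¬ (p : ℤ_[p]) ^ (m + 1) ∣ g j :=
    ⟨σ - 1, n₀, by rwa [Nat.sub_add_cancel hσ]⟩
  obtain ⟨n, hn⟩ := Nat.find_spec hex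
  set t := Nat.find hex with htdef
  have hmin : ∀ j, (p : ℤ_[p]) ^ t ∣ g j := by
    intro j
    rcases Nat.eq_zero_or_pos t with h0 | hpos
    · rw [h0]; simpa using one_dvd _
    · have h1 := Nat.find_min hex (m := t - 1) (by omega)
      push_neg at h1
      have h2 := h1 j
      rwa [Nat.sub_add_cancel hpos] at h2
  have ht : t + 1 ≤ σ := by
    have : t ≤ σ - 1 := Nat.find_min' hex ⟨n₀, by rwa [Nat.sub_add_cancel hσ]⟩
    omega
  intro ν hν
  have hτν : t + 1 ≤ ν := by omega
  set μ := ν - (t + 1) with hμ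
  haveI : NeZero (p ^ ν) := ⟨pow_ne_zero _ (by omega)⟩
  haveI : NeZero (p ^ μ) := ⟨pow_ne_zero _ (by omega)⟩
  have hpR : (1 : ℝ) < p := by exact_mod_cast hp1
  have hpR0 : (p : ℝ) ≠ 0 := by positivity
  have hgn_norm : ‖g n‖ = (p : ℝ) ^ (-(t : ℤ)) := by
    apply le_antisymm
    · rw [norm_le_pow_iff_dvd']; exact hmin n
    · by_contra hlt
      push_neg at hlt
      rw [PadicInt.norm_lt_pow_iff_norm_le_pow_sub_one] at hlt
      have he : (-(t : ℤ) - 1) = -(((t + 1 : ℕ)) : ℤ) := by push_cast; ring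
      rw [he, norm_le_pow_iff_dvd'] at hlt
      exact hn hlt
  -- the lifting construction
  have lift : ∀ c : ({j : Fin s // j ≠ n} → ZMod (p ^ μ)),
      ∃ xs : Fin s → ℤ_[p], eval xs F = 0 ∧
        (∀ j (hj : j ≠ n), xs j = a j + (p : ℤ_[p]) ^ (t + 1) * ((c ⟨j, hj⟩).val : ℤ_[p])) := by
    intro c
    set b : Fin s → ℤ_[p] := fun j =>
      if hj : j = n then a j
      else a j + (p : ℤ_[p]) ^ (t + 1) * ((c ⟨j, hj⟩).val : ℤ_[p]) with hb
    have hba : ∀ j, (p : ℤ_[p]) ^ (t + 1) ∣ b j - a j := by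
      intro j; by_cases hj : j = n <;> simp [hb, hj]
    have hFb : (p : ℤ_[p]) ^ (t + 1) * (p : ℤ_[p]) ^ t ∣ eval b F := by
      have h := step_dvd F b a ((p : ℤ_[p]) ^ (t + 1)) ((p : ℤ_[p]) ^ t)
        (pow_dvd_pow _ (by omega)) hba hmin
      rwa [hFa, sub_zero] at h
    set f : Polynomial ℤ_[p] :=
      aeval (fun j => if j = n then Polynomial.X else Polynomial.C (b j)) F with hfdef
    have hfeval : ∀ u, f.eval u = eval (Function.update b n u) F := eval_aeval n b F
    have hfder : ∀ u, (Polynomial.derivative f).eval u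
        = eval (Function.update b n u) (pderiv n F) := by
      intro u; rw [hfdef, derivative_aeval]; exact eval_aeval n b (pderiv n F) u
    have hbn : b n = a n := by simp [hb]
    have hupdeq : Function.update b n (a n) = b := by
      rw [← hbn]; exact Function.update_eq_self _ _
    have hdernorm : ‖(Polynomial.derivative f).eval (a n)‖ = (p : ℝ) ^ (-(t : ℤ)) := by
      rw [hfder, hupdeq]
      obtain ⟨w, hw⟩ := dvd_eval_sub ((p : ℤ_[p]) ^ (t + 1)) (pderiv n F) b a hba
      have heq : eval b (pderiv n F) = g n + (p : ℤ_[p]) ^ (t + 1) * w := by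
        rw [← hw, hg]; ring
      have hwnorm : ‖(p : ℤ_[p]) ^ (t + 1) * w‖ < ‖g n‖ := by
        calc ‖(p : ℤ_[p]) ^ (t + 1) * w‖ ≤ (p : ℝ) ^ (-((t + 1 : ℕ) : ℤ)) := by
              rw [norm_le_pow_iff_dvd']; exact Dvd.intro w rfl
          _ < (p : ℝ) ^ (-(t : ℤ)) := by
              apply zpow_lt_zpow_right₀ hpR; push_cast; omega
          _ = ‖g n‖ := hgn_norm.symm
      rw [heq, add_comm, PadicInt.norm_add_eq_max_of_ne (ne_of_lt hwnorm), hgn_norm,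
        max_eq_right (le_of_lt (hgn_norm ▸ hwnorm))]
    have hnorm : ‖f.eval (a n)‖ < ‖(Polynomial.derivative f).eval (a n)‖ ^ 2 := by
      rw [hfeval, hupdeq, hdernorm]
      calc ‖eval b F‖ ≤ (p : ℝ) ^ (-((2 * t + 1 : ℕ) : ℤ)) := by
            rw [norm_le_pow_iff_dvd']
            have : (p : ℤ_[p]) ^ (2 * t + 1) = (p : ℤ_[p]) ^ (t + 1) * (p : ℤ_[p]) ^ t := by
              rw [← pow_add]; ring_nf
            rw [this]; exact hFb
        _ < ((p : ℝ) ^ (-(t : ℤ))) ^ 2 := by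
            rw [← zpow_natCast ((p:ℝ) ^ (-(t:ℤ))) 2, ← zpow_mul]
            apply zpow_lt_zpow_right₀ hpR
            push_cast; omega
    obtain ⟨z, hz0, hzlt, -, -⟩ := hensels_lemma hnorm
    refine ⟨Function.update b n z, ?_, ?_⟩
    · rw [← hfeval]; exact hz0
    · intro j hj
      rw [Function.update_of_ne hj, hb]
      simp [hj]
  choose xs hxs0 hxs1 using lift
  -- the injection
  set T := {x : Fin s → ZMod (p ^ ν) //
    MvPolynomial.eval x (MvPolynomial.map (PadicInt.toZModPow ν) F) = 0} with hT
  have hfun : ∀ c, (fun j => PadicInt.toZModPow ν (xs c j)) ∈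
      {x : Fin s → ZMod (p ^ ν) |
        MvPolynomial.eval x (MvPolynomial.map (PadicInt.toZModPow ν) F) = 0} := by
    intro c
    show eval _ (map (PadicInt.toZModPow ν) F) = 0
    rw [eval_map_toZMod, hxs0 c, map_zero]
  set Φ : ({j : Fin s // j ≠ n} → ZMod (p ^ μ)) → T :=
    fun c => ⟨fun j => PadicInt.toZModPow ν (xs c j), hfun c⟩ with hΦ
  have hpne : (p : ℤ_[p]) ≠ 0 := Nat.cast_ne_zero.mpr (by omega)
  have hinj : Function.Injective Φ := by
    intro c c' hcc
    funext j
    have h1 := congrFun (congrArg Subtype.val hcc) j.1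
    simp only [hΦ] at h1
    rw [hxs1 c j.1 j.2, hxs1 c' j.1 j.2] at h1
    have h2 : (p : ℤ_[p]) ^ ν ∣
        ((p : ℤ_[p]) ^ (t + 1) * ((c j).val : ℤ_[p])
          - (p : ℤ_[p]) ^ (t + 1) * ((c' j).val : ℤ_[p])) := by
      rw [← toZModPow_eq_zero_iff_dvd, map_sub, sub_eq_zero]
      have : ∀ u : ℤ_[p], PadicInt.toZModPow ν (a j.1 + u) =
          PadicInt.toZModPow ν (a j.1) + PadicInt.toZModPow ν u := fun u => map_add _ _ _
      have h3 := h1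
      rw [this, this] at h3
      exact add_left_cancel h3
    have h4 : (p : ℤ_[p]) ^ μ ∣ (((c j).val : ℤ_[p]) - ((c' j).val : ℤ_[p])) := by
      have hν' : ν = (t + 1) + μ := by omega
      rw [hν', pow_add, ← mul_sub] at h2
      exact (mul_dvd_mul_iff_left (pow_ne_zero _ hpne)).mp h2
    have h5 : ((((c j).val : ℕ)) : ZMod (p ^ μ)) = (((c' j).val : ℕ) : ZMod (p ^ μ)) := by
      have := (toZModPow_eq_zero_iff_dvd _ μ).mpr h4
      rw [map_sub, sub_eq_zero] at this
      simpa using this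
    simpa [ZMod.natCast_val, ZMod.cast_id] using h5
  have hcard1 : Nat.card ({j : Fin s // j ≠ n} → ZMod (p ^ μ)) = (p ^ μ) ^ (s - 1) := by
    rw [Nat.card_fun]
    congr 1
    · rw [Nat.card_eq_fintype_card, ZMod.card]
    · rw [Nat.card_eq_fintype_card]
      have : Fintype.card {j : Fin s // j ≠ n} = Fintype.card (Fin s) - Fintype.card {j : Fin s // j = n} :=
        Fintype.card_subtype_compl _
      rw [this, Fintype.card_subtype_eq, Fintype.card_fin]
  have hle : ((p ^ μ) ^ (s - 1) : ℕ) ≤ Nat.card T := by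
    rw [← hcard1]
    exact Nat.card_le_card_of_injective Φ hinj
  have hs1 : 1 ≤ s := n.pos
  -- final arithmetic
  have hfin : (p : ℝ) ^ (((1 : ℤ) - 2 * σ) * ((s : ℤ) - 1)) * (p : ℝ) ^ ((ν : ℤ) * ((s : ℤ) - 1))
      ≤ (((p ^ μ) ^ (s - 1) : ℕ) : ℝ) := by
    rw [← zpow_add₀ hpR0]
    push_cast
    rw [← pow_mul, ← zpow_natCast (p : ℝ) (μ * (s - 1))]
    apply zpow_le_zpow_right₀ hpR.le
    have h1 : ((μ * (s - 1) : ℕ) : ℤ) = ((ν : ℤ) - (t + 1)) * ((s : ℤ) - 1) := by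
      push_cast [hμ, Nat.cast_sub hτν, Nat.cast_sub hs1]
      ring
    rw [h1]
    have h2 : ((1 : ℤ) - 2 * σ) + (ν : ℤ) ≤ (ν : ℤ) - (t + 1) := by
      have : (t : ℤ) + 1 ≤ σ := by exact_mod_cast ht
      omega
    have h3 : (0 : ℤ) ≤ (s : ℤ) - 1 := by
      have : (1 : ℤ) ≤ s := by exact_mod_cast hs1
      omega
    calc ((1 : ℤ) - 2 * σ) * ((s : ℤ) - 1) + (ν : ℤ) * ((s : ℤ) - 1)
        = (((1 : ℤ) - 2 * σ) + ν) * ((s : ℤ) - 1) := by ring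
      _ ≤ ((ν : ℤ) - (t + 1)) * ((s : ℤ) - 1) := by
          exact mul_le_mul_of_nonneg_right h2 h3
  calc (p : ℝ) ^ (((1 : ℤ) - 2 * σ) * ((s : ℤ) - 1)) * (p : ℝ) ^ ((ν : ℤ) * ((s : ℤ) - 1))
      ≤ (((p ^ μ) ^ (s - 1) : ℕ) : ℝ) := hfin
    _ ≤ (Nat.card T : ℝ) := by exact_mod_cast hle
end
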